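/- Under assumptions (A1)-(A4) with n > 2, the graph satisfies CD(K,n) at an interior vertex x if and only if for all f ∈ ℝ^Ω with f(x) = 0: Γ₂^Ω(f,f)(x) − (1/(n−2))(Δ_Ω f)²(x) + (3K/(n−1))Γ^Ω(f,f)(x) + ((n+2)²K²/(8m(n−1)²))⟨f,f⟩_Ω − ((n+2)K/((n−1)(n−2)m))⟨f,1⟩_Ω Δ_Ω f(x) − (n(n+2)²K²/(8(n−2)(n−1)²m²))⟨f,1⟩_Ω² ≥ 0. -/

import Mathlib

open Finset

variable {V : Type*} [Fintype V] [DecidableEq V]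

/-- The weighted graph Laplacian: `Δu(x) = (1/m x) ∑_y (u y - u x) w x y`. -/
noncomputable def glap (m : V → ℝ) (w : V → V → ℝ) (u : V → ℝ) (x : V) : ℝ :=
  (1 / m x) * ∑ y, (u y - u x) * w x y

/-- The carré du champ operator `Γ(u,v) = (1/2)(Δ(uv) - vΔu - uΔv)`. -/
noncomputable def gGam (m : V → ℝ) (w : V → V → ℝ) (u v : V → ℝ) (x : V) : ℝ :=
  (1 / 2) * (glap m w (fun z => u z * v z) x - v x * glap m w u x - u x * glap m w v x)

/-- The iterated carré du champ `Γ₂(u,v) = (1/2)(ΔΓ(u,v) - Γ(Δu,v) - Γ(u,Δv))`. -/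
noncomputable def gGam2 (m : V → ℝ) (w : V → V → ℝ) (u v : V → ℝ) (x : V) : ℝ :=
  (1 / 2) * (glap m w (gGam m w u v) x - gGam m w (glap m w u) v x - gGam m w u (glap m w v) x)

/-- Vertex inner product `⟨u,v⟩ = ∑_x u x v x m x`. -/
noncomputable def vip (m : V → ℝ) (u v : V → ℝ) : ℝ := ∑ x, u x * v x * m x

/-- Edge (1-form) inner product of differentials:
`⟨du,dv⟩ = ∑_{{x,y}∈E} (u y - u x)(v y - v x) w x y = (1/2)∑_{x,y}`. -/
noncomputable def eip (w : V → V → ℝ) (u v : V → ℝ) : ℝ :=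
  (1 / 2) * ∑ x, ∑ y, (u y - u x) * (v y - v x) * w x y

/-- `(m,w)` is a weighted graph structure: positive vertex measure, symmetric
nonnegative edge weights, no loops. -/
def WeightedGraph (m : V → ℝ) (w : V → V → ℝ) : Prop :=
  (∀ x, 0 < m x) ∧ (∀ x y, w x y = w y x) ∧ (∀ x y, 0 ≤ w x y) ∧ (∀ x, w x x = 0)

/-- The underlying simple graph: `x ∼ y` iff `w x y > 0`. -/
def wgraph (w : V → V → ℝ) : SimpleGraph V := SimpleGraph.fromRel (fun x y => 0 < w x y)

/-- The Bakry-Émery curvature-dimension condition `CD(K,n)`. -/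
def CD (m : V → ℝ) (w : V → V → ℝ) (K n : ℝ) : Prop :=
  ∀ (f : V → ℝ) (x : V), gGam2 m w f f x ≥ (1 / n) * (glap m w f x) ^ 2 + K * gGam m w f f x

/-- `B` is a vertex boundary: nonempty, independent, and every boundary vertex is
adjacent to some interior vertex. -/
def GraphBoundary (w : V → V → ℝ) (B : Finset V) : Prop :=
  B.Nonempty ∧ (∀ x ∈ B, ∀ y ∈ B, w x y = 0) ∧ (∀ x ∈ B, ∃ y, y ∉ B ∧ 0 < w x y)

/-- `σ` is a Steklov eigenvalue: there is `u`, harmonic on the interior, with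
boundary restriction nonzero, and `∂u/∂n = σ u` on `B`. -/
def SteklovEig (m : V → ℝ) (w : V → V → ℝ) (B : Finset V) (σ : ℝ) : Prop :=
  ∃ u : V → ℝ, (∃ x ∈ B, u x ≠ 0) ∧ (∀ x, x ∉ B → glap m w u x = 0) ∧
    (∀ x ∈ B, - glap m w u x = σ * u x)

/-- `μ` is an eigenvalue of `-Δ`. -/
def LapEig (m : V → ℝ) (w : V → V → ℝ) (μ : ℝ) : Prop :=
  ∃ u : V → ℝ, u ≠ 0 ∧ ∀ x, - glap m w u x = μ * u x

/-- The edge weight of the induced graph on the interior `Ω = Bᶜ`. -/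
def wRes (B : Finset V) (w : V → V → ℝ) : V → V → ℝ :=
  fun x y => if x ∈ B ∨ y ∈ B then 0 else w x y

set_option linter.unusedSectionVars false

lemma glap_sub_const (m : V → ℝ) (w : V → V → ℝ) (u : V → ℝ) (C : ℝ) (y : V) :
    glap m w (fun z => u z - C) y = glap m w u y := by
  simp [glap, sub_sub_sub_cancel_right]

lemma glap_mul_sub_const_left (m : V → ℝ) (w : V → V → ℝ) (u v : V → ℝ) (C : ℝ) (y : V) :
    glap m w (fun z => (u z - C) * v z) y
      = glap m w (fun z => u z * v z) y - C * glap m w v y := by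
  have h : ∀ z, ((u z - C) * v z - (u y - C) * v y) * w y z
      = (u z * v z - u y * v y) * w y z - C * ((v z - v y) * w y z) := fun z => by ring
  simp only [glap, h, Finset.sum_sub_distrib]
  rw [← Finset.mul_sum]
  ring

lemma gGam_comm (m : V → ℝ) (w : V → V → ℝ) (u v : V → ℝ) (y : V) :
    gGam m w u v y = gGam m w v u y := by
  have h : (fun z => u z * v z) = fun z => v z * u z := funext fun z => mul_comm _ _
  simp only [gGam, h]; ring

lemma gGam_sub_const_left (m : V → ℝ) (w : V → V → ℝ) (u v : V → ℝ) (C : ℝ) (y : V) :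
    gGam m w (fun z => u z - C) v y = gGam m w u v y := by
  simp only [gGam, glap_sub_const, glap_mul_sub_const_left]
  ring

lemma gGam_sub_const_right (m : V → ℝ) (w : V → V → ℝ) (u v : V → ℝ) (C : ℝ) (y : V) :
    gGam m w u (fun z => v z - C) y = gGam m w u v y := by
  rw [gGam_comm, gGam_sub_const_left, gGam_comm]

lemma gGam_sub_const (m : V → ℝ) (w : V → V → ℝ) (u : V → ℝ) (C : ℝ) (y : V) :
    gGam m w (fun z => u z - C) (fun z => u z - C) y = gGam m w u u y := by
  rw [gGam_sub_const_left, gGam_sub_const_right]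

lemma gGam2_sub_const (m : V → ℝ) (w : V → V → ℝ) (u : V → ℝ) (C : ℝ) (y : V) :
    gGam2 m w (fun z => u z - C) (fun z => u z - C) y = gGam2 m w u u y := by
  have hg : gGam m w (fun z => u z - C) (fun z => u z - C) = gGam m w u u :=
    funext fun z => gGam_sub_const m w u C z
  have hl : glap m w (fun z => u z - C) = glap m w u :=
    funext fun z => glap_sub_const m w u C z
  simp only [gGam2, hg, hl, gGam_sub_const_left, gGam_sub_const_right]

set_option maxHeartbeats 1600000 in
/-- under (A1)-(A4) with `n > 2`, `CD(K,n)` holds at an interior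
vertex `x` iff the interior inequality \eqref{eq-rigidity-n} holds for all
`f ∈ ℝ^Ω` with `f(x) = 0`. -/
theorem stmt15 (m : V → ℝ) (w : V → V → ℝ) (a b : V) (hW : WeightedGraph m w)
    (K n : ℝ) (hK : 0 < K) (hn : 2 < n)
    (hab : a ≠ b) (hnadj : w a b = 0)
    (hm : m a = m b)
    (hadj : ∀ x, x ∉ ({a, b} : Finset V) → 0 < w a x)
    (hwe : ∀ x, x ∉ ({a, b} : Finset V) → w a x = w b x)
    (hDega : (1 / m a) * ∑ y, w a y = n * K / (n - 1))
    (hDegb : (1 / m b) * ∑ y, w b y = n * K / (n - 1))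
    (hDb : ∀ x, x ∉ ({a, b} : Finset V) → 2 * w a x / m x = (n + 2) * K / (n - 1)) :
    ∀ x, x ∉ ({a, b} : Finset V) →
      ((∀ f : V → ℝ,
          gGam2 m w f f x ≥ (1 / n) * (glap m w f x) ^ 2 + K * gGam m w f f x) ↔
       (∀ f : V → ℝ, f x = 0 →
          gGam2 m (wRes {a, b} w) f f x
            - (1 / (n - 2)) * (glap m (wRes {a, b} w) f x) ^ 2
            + (3 * K / (n - 1)) * gGam m (wRes {a, b} w) f f x
            + ((n + 2) ^ 2 * K ^ 2 / (8 * m a * (n - 1) ^ 2))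
                * (∑ z ∈ ({a, b} : Finset V)ᶜ, f z * f z * m z)
            - ((n + 2) * K / ((n - 1) * (n - 2) * m a))
                * (∑ z ∈ ({a, b} : Finset V)ᶜ, f z * m z)
                * glap m (wRes {a, b} w) f x
            - (n * (n + 2) ^ 2 * K ^ 2 / (8 * (n - 2) * (n - 1) ^ 2 * (m a) ^ 2))
                * (∑ z ∈ ({a, b} : Finset V)ᶜ, f z * m z) ^ 2 ≥ 0)) := by

  intro x hx
  obtain ⟨hmpos, hwsymm, hwnn, hwloop⟩ := hW
  have hmem : ∀ z : V, z ∉ ({a, b} : Finset V) ↔ z ≠ a ∧ z ≠ b := by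
    intro z; simp [not_or]
  obtain ⟨hxa, hxb⟩ := (hmem x).mp hx
  have hn1 : (0:ℝ) < n - 1 := by linarith
  have hn2 : (0:ℝ) < n - 2 := by linarith
  have hnp : (0:ℝ) < n := by linarith
  have hn2p : (0:ℝ) < n + 2 := by linarith
  have hMp : 0 < m a := hmpos a
  have hmxp : 0 < m x := hmpos x
  set c : ℝ := (n + 2) * K / (2 * (n - 1)) with hc
  have hc0 : 0 < c := by
    rw [hc]; exact div_pos (by nlinarith) (by nlinarith)
  have hwa : ∀ z, z ∉ ({a, b} : Finset V) → w a z = c * m z := by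
    intro z hz
    have h := hDb z hz
    have hmz : m z ≠ 0 := (hmpos z).ne'
    rw [hc]
    field_simp at h ⊢
    linarith
  have hwb : ∀ z, z ∉ ({a, b} : Finset V) → w b z = c * m z := by
    intro z hz; rw [← hwe z hz]; exact hwa z hz
  have hsplit : ∀ h : V → ℝ, (∑ y, h y) = h a + h b + ∑ y ∈ ({a, b} : Finset V)ᶜ, h y := by
    intro h
    rw [← Finset.sum_add_sum_compl ({a, b} : Finset V) h, Finset.sum_pair hab]
  have hS : (∑ z ∈ ({a, b} : Finset V)ᶜ, m z) = 2 * n * m a / (n + 2) := by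
    have h1 : (∑ y, w a y) = c * ∑ z ∈ ({a, b} : Finset V)ᶜ, m z := by
      rw [hsplit (fun z => w a z), hwloop a, hnadj,
        Finset.sum_congr rfl (fun z hz => hwa z (Finset.mem_compl.mp hz)), ← Finset.mul_sum]
      ring
    have h2 := hDega
    rw [h1, hc] at h2
    have hMne := hMp.ne'
    field_simp at h2 ⊢
    apply mul_left_cancel₀ (show (K * (n - 1)) ≠ 0 from (mul_pos hK hn1).ne')
    linear_combination (K * (n - 1)) * h2
  have hglapR : ∀ (u : V → ℝ) (y : V), y ∉ ({a, b} : Finset V) →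
      glap m (wRes {a, b} w) u y
        = (1 / m y) * ∑ z ∈ ({a, b} : Finset V)ᶜ, (u z - u y) * w y z := by
    intro u y hy
    simp only [glap]
    rw [hsplit (fun z => (u z - u y) * wRes {a, b} w y z)]
    have h1 : wRes {a, b} w y a = 0 := by simp [wRes]
    have h2 : wRes {a, b} w y b = 0 := by simp [wRes]
    rw [h1, h2]
    rw [Finset.sum_congr rfl (fun z hz => by
      have hz' := Finset.mem_compl.mp hz
      rw [show wRes {a, b} w y z = w y z from if_neg (by push_neg; exact ⟨hy, hz'⟩)])]
    ring
  have hglapW : ∀ (u : V → ℝ) (y : V), y ∉ ({a, b} : Finset V) →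
      glap m w u y = (1 / m y) * ((u a - u y) * (c * m y) + (u b - u y) * (c * m y)
        + ∑ z ∈ ({a, b} : Finset V)ᶜ, (u z - u y) * w y z) := by
    intro u y hy
    simp only [glap]
    rw [hsplit (fun z => (u z - u y) * w y z)]
    rw [show w y a = c * m y from by rw [hwsymm y a]; exact hwa y hy]
    rw [show w y b = c * m y from by rw [hwsymm y b]; exact hwb y hy]
  have hglapA : ∀ u : V → ℝ,
      glap m w u a = (1 / m a) * ∑ z ∈ ({a, b} : Finset V)ᶜ, (u z - u a) * (c * m z) := by
    intro u
    simp only [glap]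
    rw [hsplit (fun z => (u z - u a) * w a z), hwloop a, hnadj]
    rw [Finset.sum_congr rfl (fun z hz => by
      rw [hwa z (Finset.mem_compl.mp hz)])]
    ring
  have hglapB : ∀ u : V → ℝ,
      glap m w u b = (1 / m a) * ∑ z ∈ ({a, b} : Finset V)ᶜ, (u z - u b) * (c * m z) := by
    intro u
    simp only [glap]
    rw [hsplit (fun z => (u z - u b) * w b z)]
    rw [show w b a = 0 from by rw [← hwsymm a b]; exact hnadj, hwloop b]
    rw [Finset.sum_congr rfl (fun z hz => by
      rw [hwb z (Finset.mem_compl.mp hz)])]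
    rw [← hm]
    ring
  have hLgen : ∀ (u : V → ℝ) (y : V), y ∉ ({a, b} : Finset V) →
      glap m w u y = glap m (wRes {a, b} w) u y + c * ((u a - u y) + (u b - u y)) := by
    intro u y hy
    rw [hglapW u y hy, hglapR u y hy]
    have hmy := (hmpos y).ne'
    field_simp
    ring
  have hcongrR : ∀ u u' : V → ℝ, (∀ z, z ∉ ({a, b} : Finset V) → u z = u' z) →
      ∀ y, y ∉ ({a, b} : Finset V) →
      glap m (wRes {a, b} w) u y = glap m (wRes {a, b} w) u' y := by
    intro u u' h y hy
    rw [hglapR u y hy, hglapR u' y hy]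
    congr 1
    refine Finset.sum_congr rfl fun z hz => ?_
    rw [h z (Finset.mem_compl.mp hz), h y hy]
  have hcongrG : ∀ u u' v v' : V → ℝ, (∀ z, z ∉ ({a, b} : Finset V) → u z = u' z) →
      (∀ z, z ∉ ({a, b} : Finset V) → v z = v' z) →
      ∀ y, y ∉ ({a, b} : Finset V) →
      gGam m (wRes {a, b} w) u v y = gGam m (wRes {a, b} w) u' v' y := by
    intro u u' v v' hu hv y hy
    simp only [gGam]
    rw [hcongrR (fun z => u z * v z) (fun z => u' z * v' z)
        (fun z hz => by show u z * v z = u' z * v' z; rw [hu z hz, hv z hz]) y hy,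
      hcongrR u u' hu y hy, hcongrR v v' hv y hy, hu y hy, hv y hy]
  have hcongrG2 : ∀ u u' : V → ℝ, (∀ z, z ∉ ({a, b} : Finset V) → u z = u' z) →
      gGam2 m (wRes {a, b} w) u u x = gGam2 m (wRes {a, b} w) u' u' x := by
    intro u u' hu
    simp only [gGam2]
    rw [hcongrR (gGam m (wRes {a, b} w) u u) (gGam m (wRes {a, b} w) u' u')
        (fun z hz => hcongrG u u' u u' hu hu z hz) x hx,
      hcongrG (glap m (wRes {a, b} w) u) (glap m (wRes {a, b} w) u') u u'
        (fun z hz => hcongrR u u' hu z hz) hu x hx,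
      hcongrG u u' (glap m (wRes {a, b} w) u) (glap m (wRes {a, b} w) u') hu
        (fun z hz => hcongrR u u' hu z hz) x hx]
  have key : ∀ f : V → ℝ, f x = 0 →
      gGam2 m w f f x =
        (gGam2 m (wRes {a, b} w) f f x
          - (1 / (n - 2)) * (glap m (wRes {a, b} w) f x) ^ 2
          + (3 * K / (n - 1)) * gGam m (wRes {a, b} w) f f x
          + ((n + 2) ^ 2 * K ^ 2 / (8 * m a * (n - 1) ^ 2))
              * (∑ z ∈ ({a, b} : Finset V)ᶜ, f z * f z * m z)
          - ((n + 2) * K / ((n - 1) * (n - 2) * m a))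
              * (∑ z ∈ ({a, b} : Finset V)ᶜ, f z * m z)
              * glap m (wRes {a, b} w) f x
          - (n * (n + 2) ^ 2 * K ^ 2 / (8 * (n - 2) * (n - 1) ^ 2 * (m a) ^ 2))
              * (∑ z ∈ ({a, b} : Finset V)ᶜ, f z * m z) ^ 2)
        + ((n - 2) * c ^ 2 / (2 * n)) *
            (f a + f b - 2 * glap m (wRes {a, b} w) f x / ((n - 2) * c)
              - n * (∑ z ∈ ({a, b} : Finset V)ᶜ, f z * m z) / ((n - 2) * m a)) ^ 2
        + (1 / n) * (glap m w f x) ^ 2 + K * gGam m w f f x := by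
    intro f hf
    have hGy : ∀ y, y ∉ ({a, b} : Finset V) → gGam m w f f y
        = gGam m (wRes {a, b} w) f f y + (c / 2) * ((f a - f y) ^ 2 + (f b - f y) ^ 2) := by
      intro y hy
      simp only [gGam]
      rw [hLgen (fun z => f z * f z) y hy, hLgen f y hy]
      ring
    have A1 : glap m w f x = 1 / m x * ((∑ z ∈ ({a, b} : Finset V)ᶜ, f z * w x z)
        + c * m x * f a + c * m x * f b) := by
      rw [hglapW f x hx, hf]
      simp only [sub_zero]
      ring
    have A2 : gGam m w f f x = 1 / (2 * m x) * ((∑ z ∈ ({a, b} : Finset V)ᶜ, f z * f z * w x z)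
        + c * m x * f a ^ 2 + c * m x * f b ^ 2) := by
      simp only [gGam]
      rw [hglapW (fun z => f z * f z) x hx, hglapW f x hx, hf]
      simp only [sub_zero, mul_zero, zero_mul]
      ring
    have A3 : glap m w f a = c / m a * ((∑ z ∈ ({a, b} : Finset V)ᶜ, f z * m z)
        - f a * (∑ z ∈ ({a, b} : Finset V)ᶜ, m z)) := by
      rw [hglapA f]
      rw [Finset.sum_congr rfl (fun z _ => show (f z - f a) * (c * m z)
          = c * (f z * m z) - (f a * c) * m z from by ring)]
      rw [Finset.sum_sub_distrib, ← Finset.mul_sum, ← Finset.mul_sum]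
      ring
    have A4 : glap m w f b = c / m a * ((∑ z ∈ ({a, b} : Finset V)ᶜ, f z * m z)
        - f b * (∑ z ∈ ({a, b} : Finset V)ᶜ, m z)) := by
      rw [hglapB f]
      rw [Finset.sum_congr rfl (fun z _ => show (f z - f b) * (c * m z)
          = c * (f z * m z) - (f b * c) * m z from by ring)]
      rw [Finset.sum_sub_distrib, ← Finset.mul_sum, ← Finset.mul_sum]
      ring
    have A5 : gGam m w f f a = c / (2 * m a) * ((∑ z ∈ ({a, b} : Finset V)ᶜ, f z * f z * m z)
        - 2 * f a * (∑ z ∈ ({a, b} : Finset V)ᶜ, f z * m z)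
        + f a ^ 2 * (∑ z ∈ ({a, b} : Finset V)ᶜ, m z)) := by
      simp only [gGam]
      rw [hglapA (fun z => f z * f z), hglapA f]
      rw [Finset.sum_congr rfl (fun z _ => show (f z * f z - f a * f a) * (c * m z)
          = c * (f z * f z * m z) - (f a * f a * c) * m z from by ring)]
      rw [Finset.sum_congr rfl (fun z _ => show (f z - f a) * (c * m z)
          = c * (f z * m z) - (f a * c) * m z from by ring)]
      rw [Finset.sum_sub_distrib, Finset.sum_sub_distrib, ← Finset.mul_sum, ← Finset.mul_sum,
        ← Finset.mul_sum, ← Finset.mul_sum]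
      ring
    have A6 : gGam m w f f b = c / (2 * m a) * ((∑ z ∈ ({a, b} : Finset V)ᶜ, f z * f z * m z)
        - 2 * f b * (∑ z ∈ ({a, b} : Finset V)ᶜ, f z * m z)
        + f b ^ 2 * (∑ z ∈ ({a, b} : Finset V)ᶜ, m z)) := by
      simp only [gGam]
      rw [hglapB (fun z => f z * f z), hglapB f]
      rw [Finset.sum_congr rfl (fun z _ => show (f z * f z - f b * f b) * (c * m z)
          = c * (f z * f z * m z) - (f b * f b * c) * m z from by ring)]
      rw [Finset.sum_congr rfl (fun z _ => show (f z - f b) * (c * m z)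
          = c * (f z * m z) - (f b * c) * m z from by ring)]
      rw [Finset.sum_sub_distrib, Finset.sum_sub_distrib, ← Finset.mul_sum, ← Finset.mul_sum,
        ← Finset.mul_sum, ← Finset.mul_sum]
      ring
    have HDOR : glap m (wRes {a, b} w) f x
        = 1 / m x * (∑ z ∈ ({a, b} : Finset V)ᶜ, f z * w x z) := by
      rw [hglapR f x hx, hf]
      simp only [sub_zero]
    have HGAR : gGam m (wRes {a, b} w) f f x
        = 1 / (2 * m x) * (∑ z ∈ ({a, b} : Finset V)ᶜ, f z * f z * w x z) := by
      simp only [gGam]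
      rw [hglapR (fun z => f z * f z) x hx, hglapR f x hx, hf]
      simp only [sub_zero, mul_zero, zero_mul]
      ring
    have hWW : (∑ z ∈ ({a, b} : Finset V)ᶜ, glap m (wRes {a, b} w) f z * f z * w x z)
        = 2 * m x * gGam m (wRes {a, b} w) (glap m (wRes {a, b} w) f) f x
          + (∑ z ∈ ({a, b} : Finset V)ᶜ, f z * w x z) ^ 2 / m x := by
      simp only [gGam]
      rw [hglapR (fun z => glap m (wRes {a, b} w) f z * f z) x hx, hglapR f x hx, hf]
      simp only [sub_zero, mul_zero, zero_mul]
      field_simp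
      ring
    have hsum2 : (∑ z ∈ ({a, b} : Finset V)ᶜ, glap m w f z * f z * w x z)
        = (∑ z ∈ ({a, b} : Finset V)ᶜ, glap m (wRes {a, b} w) f z * f z * w x z)
          + (c * (f a + f b)) * (∑ z ∈ ({a, b} : Finset V)ᶜ, f z * w x z)
          - (2 * c) * (∑ z ∈ ({a, b} : Finset V)ᶜ, f z * f z * w x z) := by
      rw [Finset.sum_congr rfl (fun z hz => show glap m w f z * f z * w x z
          = glap m (wRes {a, b} w) f z * f z * w x z
            + ((c * (f a + f b)) * (f z * w x z) - (2 * c) * (f z * f z * w x z)) from by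
          rw [hLgen f z (Finset.mem_compl.mp hz)]; ring)]
      rw [Finset.sum_add_distrib, Finset.sum_sub_distrib, ← Finset.mul_sum, ← Finset.mul_sum]
      ring
    have h5 : gGam m w (glap m w f) f x
        = 1 / 2 * (1 / m x * ((glap m w f a * f a) * (c * m x) + (glap m w f b * f b) * (c * m x)
            + ((∑ z ∈ ({a, b} : Finset V)ᶜ, glap m (wRes {a, b} w) f z * f z * w x z)
              + (c * (f a + f b)) * (∑ z ∈ ({a, b} : Finset V)ᶜ, f z * w x z)
              - (2 * c) * (∑ z ∈ ({a, b} : Finset V)ᶜ, f z * f z * w x z))))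
          - 1 / 2 * (glap m w f x * glap m w f x) := by
      simp only [gGam]
      rw [hglapW (fun z => glap m w f z * f z) x hx, hf]
      simp only [sub_zero, mul_zero, zero_mul]
      rw [hsum2]
      ring
    have h1 : glap m w (gGam m w f f) x
        = 1 / m x * ((gGam m w f f a - gGam m w f f x) * (c * m x)
            + (gGam m w f f b - gGam m w f f x) * (c * m x)
            + (m x * glap m (wRes {a, b} w) (gGam m (wRes {a, b} w) f f) x
              + c * (∑ z ∈ ({a, b} : Finset V)ᶜ, f z * f z * w x z)
              - (c * (f a + f b)) * (∑ z ∈ ({a, b} : Finset V)ᶜ, f z * w x z))) := by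
      rw [hglapW (gGam m w f f) x hx]
      have hUU : (∑ z ∈ ({a, b} : Finset V)ᶜ,
            (gGam m (wRes {a, b} w) f f z - gGam m (wRes {a, b} w) f f x) * w x z)
          = m x * glap m (wRes {a, b} w) (gGam m (wRes {a, b} w) f f) x := by
        rw [hglapR (gGam m (wRes {a, b} w) f f) x hx]
        field_simp
      rw [Finset.sum_congr rfl (fun z hz => show
          (gGam m w f f z - gGam m w f f x) * w x z
          = (gGam m (wRes {a, b} w) f f z - gGam m (wRes {a, b} w) f f x) * w x z
            + (c * (f z * f z * w x z) - (c * (f a + f b)) * (f z * w x z)) from by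
        rw [hGy z (Finset.mem_compl.mp hz), hGy x hx, hf]; ring)]
      rw [Finset.sum_add_distrib, Finset.sum_sub_distrib, ← Finset.mul_sum, ← Finset.mul_sum, hUU]
      ring
    simp only [gGam2]
    rw [gGam_comm m w f (glap m w f) x,
      gGam_comm m (wRes {a, b} w) f (glap m (wRes {a, b} w) f) x]
    rw [h1, h5, hWW, A5, A6, A2, A3, A4, A1, HDOR, HGAR, hS, hc]
    have h1ne : (n:ℝ) - 1 ≠ 0 := hn1.ne'
    have h2ne : (n:ℝ) - 2 ≠ 0 := hn2.ne'
    have h3ne : (n:ℝ) + 2 ≠ 0 := hn2p.ne'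
    have h4ne : (n:ℝ) ≠ 0 := hnp.ne'
    have h5ne : m a ≠ 0 := hMp.ne'
    have h6ne : m x ≠ 0 := hmxp.ne'
    have h7ne : K ≠ 0 := hK.ne'
    field_simp
    ring
  constructor
  · -- CD ⟹ interior inequality
    intro hCD f hf
    set q : ℝ := (2 * glap m (wRes {a, b} w) f x / ((n - 2) * c)
        + n * (∑ z ∈ ({a, b} : Finset V)ᶜ, f z * m z) / ((n - 2) * m a)) / 2 with hq
    set f' : V → ℝ := fun z => if z = a ∨ z = b then q else f z with hf'def
    have hf'a : f' a = q := by rw [hf'def]; exact if_pos (Or.inl rfl)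
    have hf'b : f' b = q := by rw [hf'def]; exact if_pos (Or.inr rfl)
    have hf'x : f' x = 0 := by
      rw [hf'def]
      simp only [if_neg (show ¬(x = a ∨ x = b) from by push_neg; exact ⟨hxa, hxb⟩)]
      exact hf
    have hfeq : ∀ z, z ∉ ({a, b} : Finset V) → f' z = f z := by
      intro z hz
      obtain ⟨h1, h2⟩ := (hmem z).mp hz
      rw [hf'def]
      exact if_neg (by push_neg; exact ⟨h1, h2⟩)
    have cg1 : glap m (wRes {a, b} w) f' x = glap m (wRes {a, b} w) f x :=
      hcongrR f' f hfeq x hx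
    have cg2 : gGam m (wRes {a, b} w) f' f' x = gGam m (wRes {a, b} w) f f x :=
      hcongrG f' f f' f hfeq hfeq x hx
    have cg3 : gGam2 m (wRes {a, b} w) f' f' x = gGam2 m (wRes {a, b} w) f f x :=
      hcongrG2 f' f hfeq
    have cg4 : (∑ z ∈ ({a, b} : Finset V)ᶜ, f' z * m z)
        = ∑ z ∈ ({a, b} : Finset V)ᶜ, f z * m z :=
      Finset.sum_congr rfl fun z hz => by rw [hfeq z (Finset.mem_compl.mp hz)]
    have cg5 : (∑ z ∈ ({a, b} : Finset V)ᶜ, f' z * f' z * m z)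
        = ∑ z ∈ ({a, b} : Finset V)ᶜ, f z * f z * m z :=
      Finset.sum_congr rfl fun z hz => by rw [hfeq z (Finset.mem_compl.mp hz)]
    have hk := key f' hf'x
    rw [cg1, cg2, cg3, cg4, cg5, hf'a, hf'b] at hk
    have h0 : q + q - 2 * glap m (wRes {a, b} w) f x / ((n - 2) * c)
        - n * (∑ z ∈ ({a, b} : Finset V)ᶜ, f z * m z) / ((n - 2) * m a) = 0 := by
      rw [hq]; ring
    rw [h0] at hk
    have hz2 : ((n - 2) * c ^ 2 / (2 * n)) * (0:ℝ) ^ 2 = 0 := by ring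
    rw [hz2] at hk
    have hCD' := hCD f'
    linarith [hCD', hk]
  · -- interior inequality ⟹ CD
    intro hE f
    have hk := key (fun z => f z - f x) (by simp)
    have hEg := hE (fun z => f z - f x) (by simp)
    have e2 := gGam2_sub_const m w f (f x) x
    have e1 := glap_sub_const m w f (f x) x
    have e0 := gGam_sub_const m w f (f x) x
    have hA : (0:ℝ) ≤ (n - 2) * c ^ 2 / (2 * n) :=
      div_nonneg (mul_nonneg (by linarith) (sq_nonneg c)) (by linarith)
    have hsq := mul_nonneg hA (sq_nonneg (f a - f x + (f b - f x)
      - 2 * glap m (wRes {a, b} w) (fun z => f z - f x) x / ((n - 2) * c)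
      - n * (∑ z ∈ ({a, b} : Finset V)ᶜ, (f z - f x) * m z) / ((n - 2) * m a)))
    rw [← e2, ← e1, ← e0] at *
    linarith [hk, hEg, hsq]
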